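/- arXiv:1009.5638 — 3 statements merged into one kernel-verified Lean document; each statement's English description precedes it below -/
import Mathlib

section
/- Let Ψ: ℤⁿ∖{0} → ℝ⁺ satisfy the monotonicity condition Ψ(a) ≥ Ψ(b) whenever |a_i| ≤ |b_i| for all i, and suppose ∑_{a ∈ ℤⁿ∖{0}} Ψ(a) < ∞. Then for all but finitely many a ∈ ℤⁿ∖{0}, Ψ(a) < ∏_{i: a_i ≠ 0} |a_i|^{−1}. -/
lemma card_box_aux (m : ℤ) (hm : 1 ≤ m) :
    (Finset.Icc (-m) m \ {0}).card = 2 * m.toNat := by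
  rw [Finset.card_sdiff_of_subset (by simp [Finset.singleton_subset_iff]; omega)]
  simp [Int.card_Icc]
  omega

theorem stmt1 (n : ℕ) (hn : 1 ≤ n) (Ψ : (Fin n → ℤ) → ℝ)
    (hpos : ∀ a : Fin n → ℤ, a ≠ 0 → 0 < Ψ a)
    (hmono : ∀ a b : Fin n → ℤ, a ≠ 0 → b ≠ 0 →
      (∀ i, |a i| ≤ |b i|) → Ψ b ≤ Ψ a)
    (hsum : Summable (fun a : {a : Fin n → ℤ // a ≠ 0} => Ψ a.1)) :
    {a : Fin n → ℤ | a ≠ 0 ∧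
      ¬ Ψ a < ∏ i ∈ Finset.univ.filter (fun i => a i ≠ 0), (|(a i : ℝ)|)⁻¹}.Finite := by
  rw [summable_iff_vanishing] at hsum
  obtain ⟨F, hF⟩ := hsum (Set.Iio 1) (Iio_mem_nhds one_pos)
  set C : ℕ := F.card with hC
  apply Set.Finite.subset (Set.finite_Icc (fun _ : Fin n => -(C : ℤ)) (fun _ => (C : ℤ)))
  rintro a ⟨ha0, hbad⟩
  -- notation
  set supp : Finset (Fin n) := Finset.univ.filter (fun i => a i ≠ 0) with hsupp
  set P : ℕ := ∏ i ∈ supp, (a i).natAbs with hPdef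
  have hsuppne : supp.Nonempty := by
    rcases Function.ne_iff.mp ha0 with ⟨i, hi⟩
    exact ⟨i, Finset.mem_filter.mpr ⟨Finset.mem_univ i, by simpa using hi⟩⟩
  have hP1 : 1 ≤ P := Nat.one_le_iff_ne_zero.mpr (by
    rw [hPdef]
    exact Finset.prod_ne_zero_iff.mpr (fun i hi => by
      simp [hsupp] at hi; simpa using hi))
  -- Ψ a ≥ (P : ℝ)⁻¹
  have hΨa : ((P : ℝ))⁻¹ ≤ Ψ a := by
    have h1 : ∏ i ∈ supp, (|(a i : ℝ)|)⁻¹ = ((P : ℝ))⁻¹ := by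
      rw [Finset.prod_inv_distrib, hPdef]
      push_cast
      refine congrArg Inv.inv (Finset.prod_congr rfl fun i _ => ?_)
      rw [Nat.cast_natAbs, Int.cast_abs]
    calc ((P:ℝ))⁻¹ = ∏ i ∈ supp, (|(a i : ℝ)|)⁻¹ := h1.symm
      _ ≤ Ψ a := le_of_not_gt hbad
  -- main claim : P ≤ C
  have hPC : P ≤ C := by
    by_contra hPC
    push_neg at hPC
    -- the box
    set s : Finset (Fin n → ℤ) :=
      Fintype.piFinset (fun i => if a i = 0 then {0} else Finset.Icc (-|a i|) |a i| \ {0})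
      with hs
    have hmem : ∀ b ∈ s, (∀ i, |b i| ≤ |a i|) ∧ b ≠ 0 := by
      intro b hb
      rw [hs, Fintype.mem_piFinset] at hb
      have habs : ∀ i, |b i| ≤ |a i| := by
        intro i
        have := hb i
        split_ifs at this with h
        · simp_all
        · simp only [Finset.mem_sdiff, Finset.mem_Icc] at this
          rw [abs_le]; exact this.1
      refine ⟨habs, ?_⟩
      rcases hsuppne with ⟨i, hi⟩
      simp only [hsupp, Finset.mem_filter] at hi
      have := hb i
      rw [if_neg hi.2] at this
      simp only [Finset.mem_sdiff, Finset.mem_singleton] at this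
      exact fun h => this.2 (by simp [h])
    have hscard : s.card = ∏ i, (if a i = 0 then 1 else 2 * (a i).natAbs) := by
      rw [hs, Fintype.card_piFinset]
      refine Finset.prod_congr rfl fun i _ => ?_
      split_ifs with h
      · simp
      · rw [card_box_aux _ (Int.one_le_abs h), Int.abs_eq_natAbs, Int.toNat_natCast]
    have hscard2 : 2 * P ≤ s.card := by
      rw [hscard, ← Finset.prod_filter_mul_prod_filter_not Finset.univ (fun i => a i ≠ 0)]
      have h1 : ∏ i ∈ supp, (if a i = 0 then 1 else 2 * (a i).natAbs)
          = 2 ^ supp.card * P := by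
        have he : ∏ i ∈ supp, (if a i = 0 then 1 else 2 * (a i).natAbs)
            = ∏ i ∈ supp, 2 * (a i).natAbs := by
          refine Finset.prod_congr rfl fun i hi => ?_
          simp only [hsupp, Finset.mem_filter] at hi
          rw [if_neg hi.2]
        rw [he, Finset.prod_mul_distrib, Finset.prod_const, hPdef]
      have h2 : ∏ i ∈ Finset.univ.filter (fun i => ¬ a i ≠ 0),
          (if a i = 0 then 1 else 2 * (a i).natAbs) = 1 := by
        refine Finset.prod_eq_one fun i hi => ?_
        simp only [Finset.mem_filter, not_not] at hi
        rw [if_pos hi.2]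
      rw [h1, h2, mul_one]
      have : 2 ≤ 2 ^ supp.card := by
        have := Finset.card_pos.mpr hsuppne
        calc 2 = 2 ^ 1 := rfl
          _ ≤ 2 ^ supp.card := Nat.pow_le_pow_right (by norm_num) this
      exact Nat.mul_le_mul_right P this
    -- the finset of nonzero elements
    set t : Finset {a : Fin n → ℤ // a ≠ 0} := s.subtype (· ≠ 0) \ F with ht
    have hdisj : Disjoint t F := Finset.sdiff_disjoint
    have htc : P ≤ t.card := by
      have h1 : (s.subtype (· ≠ 0)).card = s.card := by
        rw [Finset.card_subtype, Finset.filter_true_of_mem (fun b hb => (hmem b hb).2)]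
      have h2 := Finset.le_card_sdiff F (s.subtype (· ≠ 0))
      rw [ht]
      omega
    have hsum1 : (t.card : ℝ) * Ψ a ≤ ∑ b ∈ t, Ψ b.1 := by
      have := Finset.card_nsmul_le_sum t (fun b => Ψ b.1) (Ψ a) (fun b hb => by
        have hbs : b.1 ∈ s := by
          have := Finset.mem_sdiff.mp hb
          have := Finset.mem_subtype.mp this.1
          exact this
        exact hmono b.1 a b.2 ha0 (hmem b.1 hbs).1)
      simpa [nsmul_eq_mul] using this
    have hlt := hF t hdisj
    simp only [Set.mem_Iio] at hlt
    have hge : (1 : ℝ) ≤ ∑ b ∈ t, Ψ b.1 := by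
      have hP0 : (0:ℝ) < (P:ℝ) := by exact_mod_cast hP1
      calc (1:ℝ) = (P:ℝ) * (P:ℝ)⁻¹ := (mul_inv_cancel₀ (ne_of_gt hP0)).symm
        _ ≤ (t.card : ℝ) * Ψ a := by
            apply mul_le_mul _ hΨa (inv_nonneg.mpr hP0.le) (Nat.cast_nonneg _)
            exact_mod_cast htc
        _ ≤ ∑ b ∈ t, Ψ b.1 := hsum1
    linarith
  -- conclude membership in the Icc box
  have habs : ∀ i, -(C : ℤ) ≤ a i ∧ a i ≤ (C : ℤ) := by
    intro i
    by_cases h : a i = 0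
    · constructor <;> omega
    · have hi : i ∈ supp := by simp [hsupp, h]
      have h1 : (a i).natAbs ≤ P := by
        rw [hPdef]
        refine Finset.single_le_prod' (f := fun j => (a j).natAbs) (fun j hj => ?_) hi
        simp only [hsupp, Finset.mem_filter] at hj
        exact Nat.one_le_iff_ne_zero.mpr (Int.natAbs_ne_zero.mpr hj.2)
      have h2 : (a i).natAbs ≤ C := le_trans h1 hPC
      omega
  rw [Set.mem_Icc]
  exact ⟨fun i => (habs i).1, fun i => (habs i).2⟩
end

section
/- Let μ be a finite doubling Borel regular measure on a metric space X which can be covered by countably many arbitrarily small balls, let f: X → ℝ⁺ be a uniformly continuous bounded function, and define ν(A) := ∫_A f dμ. Let (S_Q)_{Q∈ℕ} be a sequence of measurable subsets of X and 0 < ω < 1 a constant such that for every sufficiently small closed ball B ⊆ X, limsup_{Q→∞} μ(S_Q ∩ B) ≤ ω μ(B). Then for every measurable set W ⊆ X, limsup_{Q→∞} ν(S_Q ∩ W) ≤ ω ν(W). -/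
open MeasureTheory Filter Metric
open scoped NNReal ENNReal

private lemma my_limsup_add_le {ι : Type*} {l : Filter ι} (u v : ι → ℝ≥0∞) :
    limsup (fun n => u n + v n) l ≤ limsup u l + limsup v l := by
  refine ENNReal.le_of_forall_pos_le_add fun ε hε hfin => ?_
  have hune : limsup u l ≠ ⊤ := (lt_of_le_of_lt le_self_add hfin).ne
  have hvne : limsup v l ≠ ⊤ := (lt_of_le_of_lt le_add_self hfin).ne
  have hε2 : ((ε : ℝ≥0∞) / 2) ≠ 0 := by
    simp [ENNReal.div_eq_zero_iff, hε.ne']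
  have hu : limsup u l < limsup u l + (ε : ℝ≥0∞) / 2 := ENNReal.lt_add_right hune hε2
  have hv : limsup v l < limsup v l + (ε : ℝ≥0∞) / 2 := ENNReal.lt_add_right hvne hε2
  refine limsup_le_of_le (by isBoundedDefault) ?_
  filter_upwards [eventually_lt_of_limsup_lt hu, eventually_lt_of_limsup_lt hv] with n h1 h2
  calc u n + v n ≤ (limsup u l + (ε : ℝ≥0∞) / 2) + (limsup v l + (ε : ℝ≥0∞) / 2) :=
        add_le_add h1.le h2.le
    _ = (limsup u l + limsup v l) + ((ε : ℝ≥0∞) / 2 + (ε : ℝ≥0∞) / 2) := by ring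
    _ = limsup u l + limsup v l + (ε : ℝ≥0∞) := by rw [ENNReal.add_halves]

private lemma my_limsup_sum_le {ι κ : Type*} {l : Filter ι} (s : Finset κ) (u : κ → ι → ℝ≥0∞) :
    limsup (fun n => ∑ a ∈ s, u a n) l ≤ ∑ a ∈ s, limsup (u a) l := by
  classical
  induction s using Finset.induction_on with
  | empty =>
      simp only [Finset.sum_empty]
      exact le_of_eq limsup_const_bot
  | insert a s ha ih =>
      simp only [Finset.sum_insert ha]
      exact (my_limsup_add_le _ _).trans (add_le_add le_rfl ih)

set_option maxHeartbeats 1000000 in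
private lemma keyA {X : Type*} [MetricSpace X] [MeasurableSpace X] [BorelSpace X]
    [SecondCountableTopology X]
    (μ : Measure X) [IsFiniteMeasure μ] [μ.Regular]
    (D : ℝ≥0) (hD : ∀ (x : X) (r : ℝ), 0 < r →
      μ (closedBall x (2 * r)) ≤ (D : ℝ≥0∞) * μ (closedBall x r))
    (S : ℕ → Set X)
    (ω : ℝ) (hω1 : ω < 1)
    (r₀ : ℝ) (hr₀ : 0 < r₀)
    (hball : ∀ (x : X) (r : ℝ), 0 < r → r ≤ r₀ →
      limsup (fun Q => μ (S Q ∩ closedBall x r)) atTop ≤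
        ENNReal.ofReal ω * μ (closedBall x r))
    (W : Set X) (hW : MeasurableSet W) :
    limsup (fun Q => μ (S Q ∩ W)) atTop ≤ ENNReal.ofReal ω * μ W := by
  have hω' : ENNReal.ofReal ω ≤ 1 := by
    simpa using ENNReal.ofReal_le_ofReal hω1.le
  refine ENNReal.le_of_forall_pos_le_add fun ε hε _ => ?_
  have hε2 : ((ε : ℝ≥0∞) / 2) ≠ 0 := by
    simp [ENNReal.div_eq_zero_iff, hε.ne']
  obtain ⟨U, hWU, hUopen, hU⟩ := Set.exists_isOpen_lt_add W (measure_ne_top μ W) hε2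
  -- the Vitali family of balls
  set t : Set (X × ℝ) := {p | p.1 ∈ W ∧ 0 < p.2 ∧ p.2 ≤ r₀ ∧ closedBall p.1 p.2 ⊆ U} with ht
  set B : X × ℝ → Set X := fun p => closedBall p.1 p.2 with hB
  have hdoub : ∀ a ∈ t, μ (closedBall a.1 (3 * a.2)) ≤ ((D * D : ℝ≥0) : ℝ≥0∞) * μ (B a) := by
    rintro ⟨x, r⟩ ⟨-, hr, -, -⟩
    have h1 : μ (closedBall x (3 * r)) ≤ μ (closedBall x (2 * (2 * r))) :=
      measure_mono (closedBall_subset_closedBall (by nlinarith))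
    have h2 : μ (closedBall x (2 * (2 * r))) ≤ (D : ℝ≥0∞) * μ (closedBall x (2 * r)) :=
      hD x (2 * r) (by linarith)
    have h3 : μ (closedBall x (2 * r)) ≤ (D : ℝ≥0∞) * μ (closedBall x r) := hD x r hr
    calc μ (closedBall x (3 * r)) ≤ (D : ℝ≥0∞) * μ (closedBall x (2 * r)) := h1.trans h2
      _ ≤ (D : ℝ≥0∞) * ((D : ℝ≥0∞) * μ (closedBall x r)) := by gcongr
      _ = ((D * D : ℝ≥0) : ℝ≥0∞) * μ (B (x, r)) := by push_cast; ring
  have hfine : ∀ x ∈ W, ∀ ε' > (0 : ℝ), ∃ a ∈ t, a.2 ≤ ε' ∧ a.1 = x := by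
    intro x hx ε' hε'
    obtain ⟨δ, hδ, hδU⟩ := Metric.nhds_basis_closedBall.mem_iff.1
      (hUopen.mem_nhds (hWU hx))
    refine ⟨(x, min ε' (min δ r₀)), ⟨hx, ?_, ?_, ?_⟩, ?_, rfl⟩
    · exact lt_min hε' (lt_min hδ hr₀)
    · exact (min_le_right _ _).trans (min_le_right _ _)
    · exact (closedBall_subset_closedBall ((min_le_right _ _).trans (min_le_left _ _))).trans hδU
    · exact min_le_left _ _
  obtain ⟨u, hut, hucount, hudisj, hucov⟩ :=
    Vitali.exists_disjoint_covering_ae μ W t (D * D) (fun p => p.2) (fun p => p.1) B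
      (fun a _ => Set.Subset.rfl) hdoub
      (fun a ha => ⟨a.1, ball_subset_interior_closedBall (mem_ball_self ha.2.1)⟩)
      (fun a _ => isClosed_closedBall) hfine
  haveI := hucount.to_subtype
  have hBU : ∀ a ∈ u, B a ⊆ U := fun a ha => (hut ha).2.2.2
  have hsum : ∑' (a : u), μ (B a) = μ (⋃ a ∈ u, B a) :=
    (measure_biUnion hucount hudisj (fun a _ => measurableSet_closedBall)).symm
  have hμU : μ (⋃ a ∈ u, B a) ≤ μ U := measure_mono (Set.iUnion₂_subset hBU)
  have hsum_ne : ∑' (a : u), μ (B a) ≠ ⊤ := by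
    rw [hsum]; exact (hμU.trans_lt (hU.trans_le le_top)).ne
  -- choose a finite subfamily with small tail
  obtain ⟨v, hv⟩ : ∃ v : Finset u, ∑' (a : {a : u // a ∉ v}), μ (B a) < (ε : ℝ≥0∞) / 2 :=
    ((ENNReal.tendsto_tsum_compl_atTop_zero hsum_ne).eventually
      (gt_mem_nhds (pos_iff_ne_zero.2 hε2))).exists
  -- the pointwise estimate
  have key : ∀ Q, μ (S Q ∩ W) ≤
      (∑ a ∈ v, μ (S Q ∩ B a)) + (ε : ℝ≥0∞) / 2 := by
    intro Q
    have hsub : S Q ∩ W ⊆ (⋃ a ∈ u, (S Q ∩ B a)) ∪ (W \ ⋃ a ∈ u, B a) := by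
      intro x hx
      by_cases hxB : x ∈ ⋃ a ∈ u, B a
      · obtain ⟨a, ha, hxa⟩ := Set.mem_iUnion₂.1 hxB
        exact Or.inl (Set.mem_iUnion₂.2 ⟨a, ha, hx.1, hxa⟩)
      · exact Or.inr ⟨hx.2, hxB⟩
    calc μ (S Q ∩ W) ≤ μ (⋃ a ∈ u, (S Q ∩ B a)) + μ (W \ ⋃ a ∈ u, B a) :=
          (measure_mono hsub).trans (measure_union_le _ _)
      _ = μ (⋃ a ∈ u, (S Q ∩ B a)) := by rw [hucov, add_zero]
      _ ≤ ∑' (a : u), μ (S Q ∩ B a) := measure_biUnion_le μ hucount _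
      _ = (∑ a ∈ v, μ (S Q ∩ B a)) + ∑' (a : {a : u // a ∉ v}), μ (S Q ∩ B ↑a) := by
          rw [← Finset.tsum_subtype v (fun a => μ (S Q ∩ B a))]
          exact (Summable.tsum_add_tsum_compl (s := (↑v : Set u)) ENNReal.summable ENNReal.summable).symm
      _ ≤ (∑ a ∈ v, μ (S Q ∩ B a)) + ∑' (a : {a : u // a ∉ v}), μ (B ↑a) :=
          add_le_add_right (ENNReal.tsum_le_tsum fun a =>
            measure_mono Set.inter_subset_right) _
      _ ≤ (∑ a ∈ v, μ (S Q ∩ B a)) + (ε : ℝ≥0∞) / 2 := add_le_add_right hv.le _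
  calc limsup (fun Q => μ (S Q ∩ W)) atTop
      ≤ limsup (fun Q => (∑ a ∈ v, μ (S Q ∩ B a)) + (ε : ℝ≥0∞) / 2) atTop :=
        limsup_le_limsup (Eventually.of_forall key)
    _ ≤ limsup (fun Q => ∑ a ∈ v, μ (S Q ∩ B a)) atTop +
        limsup (fun _ : ℕ => (ε : ℝ≥0∞) / 2) atTop := my_limsup_add_le _ _
    _ = limsup (fun Q => ∑ a ∈ v, μ (S Q ∩ B a)) atTop + (ε : ℝ≥0∞) / 2 := by
        rw [limsup_const]
    _ ≤ (∑ a ∈ v, limsup (fun Q => μ (S Q ∩ B a)) atTop) + (ε : ℝ≥0∞) / 2 :=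
        add_le_add_left (my_limsup_sum_le v fun a Q => μ (S Q ∩ B a)) _
    _ ≤ (∑ a ∈ v, ENNReal.ofReal ω * μ (B a)) + (ε : ℝ≥0∞) / 2 := by
        refine add_le_add_left (Finset.sum_le_sum fun a _ => ?_) _
        obtain ⟨p, hp⟩ := a
        exact hball p.1 p.2 (hut hp).2.1 (hut hp).2.2.1
    _ = ENNReal.ofReal ω * (∑ a ∈ v, μ (B a)) + (ε : ℝ≥0∞) / 2 := by
        rw [Finset.mul_sum]
    _ ≤ ENNReal.ofReal ω * (μ W + (ε : ℝ≥0∞) / 2) + (ε : ℝ≥0∞) / 2 := by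
        gcongr
        calc (∑ a ∈ v, μ (B a)) ≤ ∑' (a : u), μ (B a) := ENNReal.sum_le_tsum v
          _ = μ (⋃ a ∈ u, B a) := hsum
          _ ≤ μ U := hμU
          _ ≤ μ W + (ε : ℝ≥0∞) / 2 := hU.le
    _ ≤ ENNReal.ofReal ω * μ W + (ε : ℝ≥0∞) := by
        rw [mul_add, add_assoc]
        gcongr
        calc ENNReal.ofReal ω * ((ε : ℝ≥0∞) / 2) + (ε : ℝ≥0∞) / 2
            ≤ 1 * ((ε : ℝ≥0∞) / 2) + (ε : ℝ≥0∞) / 2 := by gcongr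
          _ = (ε : ℝ≥0∞) := by rw [one_mul, ENNReal.add_halves]

private lemma keyB {X : Type*} [MeasurableSpace X]
    (μ : Measure X) [IsFiniteMeasure μ]
    (f : X → ℝ) (hfm : Measurable f) (hfpos : ∀ x, 0 < f x) (M : ℝ) (hM : ∀ x, f x ≤ M)
    (S : ℕ → Set X) (hS : ∀ Q, MeasurableSet (S Q))
    (ω : ℝ) (hω0 : 0 < ω) (hω1 : ω < 1)
    (hA : ∀ A : Set X, MeasurableSet A →
      limsup (fun Q => μ (S Q ∩ A)) atTop ≤ ENNReal.ofReal ω * μ A)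
    (W : Set X) (hW : MeasurableSet W) :
    limsup (fun Q => ∫⁻ x in S Q ∩ W, ENNReal.ofReal (f x) ∂μ) atTop ≤
      ENNReal.ofReal ω * ∫⁻ x in W, ENNReal.ofReal (f x) ∂μ := by
  have hω' : ENNReal.ofReal ω ≤ 1 := by
    simpa using ENNReal.ofReal_le_ofReal hω1.le
  refine ENNReal.le_of_forall_pos_le_add fun ε hε _ => ?_
  set m : ℝ := (μ Set.univ).toReal with hm
  have hm0 : 0 ≤ m := ENNReal.toReal_nonneg
  set δ : ℝ := (ε : ℝ) / (m + 1) with hδdef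
  have hδ : 0 < δ := div_pos hε (by linarith)
  have hδμ : ENNReal.ofReal δ * μ Set.univ ≤ (ε : ℝ≥0∞) := by
    have : μ Set.univ = ENNReal.ofReal m := (ENNReal.ofReal_toReal (measure_ne_top μ _)).symm
    rw [this, ← ENNReal.ofReal_mul hδ.le]
    calc ENNReal.ofReal (δ * m) ≤ ENNReal.ofReal (ε : ℝ) := by
          refine ENNReal.ofReal_le_ofReal ?_
          rw [hδdef, div_mul_eq_mul_div, div_le_iff₀ (by linarith)]
          nlinarith [(ε : ℝ≥0).coe_nonneg]
      _ = (ε : ℝ≥0∞) := ENNReal.ofReal_coe_nnreal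
  set N : ℕ := ⌊M / δ⌋₊ + 1 with hN
  set A : ℕ → Set X := fun i => W ∩ f ⁻¹' (Set.Ico (i * δ) ((i + 1) * δ)) with hA'
  have hAm : ∀ i, MeasurableSet (A i) := fun i => hW.inter (hfm measurableSet_Ico)
  have hAdisj : Set.PairwiseDisjoint (↑(Finset.range N)) A := by
    intro i _ j _ hij
    refine Set.disjoint_left.2 fun x hxi hxj => ?_
    rcases lt_or_gt_of_ne hij with h | h
    · have h1 : f x < (i + 1) * δ := hxi.2.2
      have h2 : (j : ℝ) * δ ≤ f x := hxj.2.1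
      have : ((i : ℝ) + 1) ≤ (j : ℝ) := by exact_mod_cast h
      nlinarith
    · have h1 : f x < (j + 1) * δ := hxj.2.2
      have h2 : (i : ℝ) * δ ≤ f x := hxi.2.1
      have : ((j : ℝ) + 1) ≤ (i : ℝ) := by exact_mod_cast h
      nlinarith
  have hcover : W = ⋃ i ∈ Finset.range N, A i := by
    apply Set.Subset.antisymm
    · intro x hx
      have hfx : 0 ≤ f x / δ := div_nonneg (hfpos x).le hδ.le
      refine Set.mem_iUnion₂.2 ⟨⌊f x / δ⌋₊, ?_, hx, ?_, ?_⟩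
      · rw [Finset.mem_range, hN]
        have hdiv : f x / δ ≤ M / δ := by gcongr; exact hM x
        exact Nat.lt_succ_of_le (Nat.floor_le_floor hdiv)
      · calc (⌊f x / δ⌋₊ : ℝ) * δ ≤ (f x / δ) * δ := by
              gcongr; exact Nat.floor_le hfx
          _ = f x := div_mul_cancel₀ _ hδ.ne'
      · calc f x = (f x / δ) * δ := (div_mul_cancel₀ _ hδ.ne').symm
          _ < (⌊f x / δ⌋₊ + 1) * δ := by gcongr; exact Nat.lt_floor_add_one _
    · exact Set.iUnion₂_subset fun i _ => Set.inter_subset_left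
  -- pointwise bound on the integral
  have key : ∀ Q, ∫⁻ x in S Q ∩ W, ENNReal.ofReal (f x) ∂μ ≤
      ∑ i ∈ Finset.range N, ENNReal.ofReal ((i + 1) * δ) * μ (S Q ∩ A i) := by
    intro Q
    have hsplit : S Q ∩ W = ⋃ i ∈ Finset.range N, (S Q ∩ A i) := by
      rw [hcover]; exact Set.inter_iUnion₂ _ _
    rw [hsplit, lintegral_biUnion_finset (fun i hi j hj hij =>
        (hAdisj hi hj hij).mono Set.inter_subset_right Set.inter_subset_right)
        (fun i _ => (hS Q).inter (hAm i))]
    refine Finset.sum_le_sum fun i _ => ?_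
    calc ∫⁻ x in S Q ∩ A i, ENNReal.ofReal (f x) ∂μ
        ≤ ∫⁻ _ in S Q ∩ A i, ENNReal.ofReal ((i + 1) * δ) ∂μ := by
          refine setLIntegral_mono measurable_const fun x hx => ?_
          exact ENNReal.ofReal_le_ofReal hx.2.2.2.le
      _ = ENNReal.ofReal ((i + 1) * δ) * μ (S Q ∩ A i) := by
          rw [setLIntegral_const]
  calc limsup (fun Q => ∫⁻ x in S Q ∩ W, ENNReal.ofReal (f x) ∂μ) atTop
      ≤ limsup (fun Q => ∑ i ∈ Finset.range N,
          ENNReal.ofReal ((i + 1) * δ) * μ (S Q ∩ A i)) atTop :=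
        limsup_le_limsup (Eventually.of_forall key)
    _ ≤ ∑ i ∈ Finset.range N,
          limsup (fun Q => ENNReal.ofReal ((i + 1) * δ) * μ (S Q ∩ A i)) atTop :=
        my_limsup_sum_le _ _
    _ = ∑ i ∈ Finset.range N,
          ENNReal.ofReal ((i + 1) * δ) * limsup (fun Q => μ (S Q ∩ A i)) atTop := by
        refine Finset.sum_congr rfl fun i _ => ?_
        exact ENNReal.limsup_const_mul_of_ne_top ENNReal.ofReal_ne_top
    _ ≤ ∑ i ∈ Finset.range N,
          ENNReal.ofReal ((i + 1) * δ) * (ENNReal.ofReal ω * μ (A i)) := by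
        gcongr with i
        exact hA (A i) (hAm i)
    _ = ENNReal.ofReal ω * ∑ i ∈ Finset.range N, ENNReal.ofReal ((i + 1) * δ) * μ (A i) := by
        rw [Finset.mul_sum]; refine Finset.sum_congr rfl fun i _ => by ring
    _ ≤ ENNReal.ofReal ω * ∑ i ∈ Finset.range N,
          ∫⁻ x in A i, (ENNReal.ofReal (f x) + ENNReal.ofReal δ) ∂μ := by
        gcongr with i
        calc ENNReal.ofReal ((i + 1) * δ) * μ (A i)
            = ∫⁻ _ in A i, ENNReal.ofReal ((i + 1) * δ) ∂μ := (setLIntegral_const _ _).symm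
          _ ≤ ∫⁻ x in A i, (ENNReal.ofReal (f x) + ENNReal.ofReal δ) ∂μ := by
              refine setLIntegral_mono ((hfm.ennreal_ofReal).add measurable_const)
                fun x hx => ?_
              rw [← ENNReal.ofReal_add (hfpos x).le hδ.le]
              refine ENNReal.ofReal_le_ofReal ?_
              have : (i : ℝ) * δ ≤ f x := hx.2.1
              nlinarith
    _ = ENNReal.ofReal ω * ∫⁻ x in W, (ENNReal.ofReal (f x) + ENNReal.ofReal δ) ∂μ := by
        congr 1
        rw [hcover, lintegral_biUnion_finset hAdisj (fun i _ => hAm i)]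
    _ ≤ ENNReal.ofReal ω * ∫⁻ x in W, ENNReal.ofReal (f x) ∂μ + (ε : ℝ≥0∞) := by
        rw [lintegral_add_right _ measurable_const, lintegral_const, mul_add]
        gcongr
        calc ENNReal.ofReal ω * (ENNReal.ofReal δ * μ.restrict W Set.univ)
            ≤ 1 * (ENNReal.ofReal δ * μ Set.univ) := by
              rw [Measure.restrict_apply_univ]
              gcongr
              exact Set.subset_univ W
          _ ≤ (ε : ℝ≥0∞) := by rw [one_mul]; exact hδμ

theorem stmt9 {X : Type*} [MetricSpace X] [MeasurableSpace X] [BorelSpace X]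
    (μ : Measure X) [IsFiniteMeasure μ] [μ.Regular]
    (hdoubling : ∃ D : ℝ≥0, ∀ (x : X) (r : ℝ), 0 < r →
      μ (closedBall x (2 * r)) ≤ (D : ℝ≥0∞) * μ (closedBall x r))
    (hcover : ∀ δ : ℝ, 0 < δ → ∃ (c : ℕ → X) (r : ℕ → ℝ),
      (∀ i, 0 < r i ∧ r i < δ) ∧ (Set.univ : Set X) ⊆ ⋃ i, ball (c i) (r i))
    (f : X → ℝ) (hfpos : ∀ x, 0 < f x) (hfbdd : ∃ M : ℝ, ∀ x, f x ≤ M)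
    (hfuc : UniformContinuous f)
    (S : ℕ → Set X) (hS : ∀ Q, MeasurableSet (S Q))
    (ω : ℝ) (hω0 : 0 < ω) (hω1 : ω < 1)
    (hball : ∃ r₀ : ℝ, 0 < r₀ ∧ ∀ (x : X) (r : ℝ), 0 < r → r ≤ r₀ →
      limsup (fun Q => μ (S Q ∩ closedBall x r)) atTop ≤
        ENNReal.ofReal ω * μ (closedBall x r)) :
    ∀ W : Set X, MeasurableSet W →
      limsup (fun Q => ∫ x in S Q ∩ W, f x ∂μ) atTop ≤ ω * ∫ x in W, f x ∂μ := by
  intro W hW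
  haveI : SecondCountableTopology X := by
    refine Metric.secondCountable_of_almost_dense_set fun ε hε => ?_
    obtain ⟨c, r, hr, hcov⟩ := hcover ε hε
    refine ⟨Set.range c, Set.countable_range c, fun x => ?_⟩
    obtain ⟨i, hi⟩ := Set.mem_iUnion.1 (hcov (Set.mem_univ x))
    exact ⟨c i, Set.mem_range_self i, (mem_ball.1 hi).le.trans (hr i).2.le⟩
  obtain ⟨D, hD⟩ := hdoubling
  obtain ⟨r₀, hr₀p, hball'⟩ := hball
  obtain ⟨M, hM⟩ := hfbdd
  have hfm : Measurable f := hfuc.continuous.measurable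
  have hAmeas : ∀ A : Set X, MeasurableSet A →
      limsup (fun Q => μ (S Q ∩ A)) atTop ≤ ENNReal.ofReal ω * μ A :=
    fun A hA => keyA μ D hD S ω hω1 r₀ hr₀p hball' A hA
  have hB := keyB μ f hfm hfpos M hM S hS ω hω0 hω1 hAmeas W hW
  -- conversion to real-valued integrals
  have hint : ∀ s : Set X, ∫ x in s, f x ∂μ =
      (∫⁻ x in s, ENNReal.ofReal (f x) ∂μ).toReal := by
    intro s
    rw [integral_eq_lintegral_of_nonneg_ae
      (Eventually.of_forall fun x => (hfpos x).le)
      (hfuc.continuous.aestronglyMeasurable)]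
  set T : ℝ≥0∞ := ∫⁻ x in W, ENNReal.ofReal (f x) ∂μ with hT
  have hTne : T ≠ ⊤ := by
    have : T ≤ ∫⁻ _ in W, ENNReal.ofReal M ∂μ := by
      refine setLIntegral_mono measurable_const fun x _ => ENNReal.ofReal_le_ofReal (hM x)
    rw [setLIntegral_const] at this
    exact (this.trans_lt (ENNReal.mul_lt_top ENNReal.ofReal_lt_top (measure_lt_top μ W))).ne
  set L : ℝ≥0∞ := ENNReal.ofReal ω * T with hL
  have hLne : L ≠ ⊤ := ENNReal.mul_ne_top ENNReal.ofReal_ne_top hTne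
  have hgoal : limsup (fun Q => (∫⁻ x in S Q ∩ W, ENNReal.ofReal (f x) ∂μ).toReal) atTop ≤
      L.toReal := by
    refine le_of_forall_pos_le_add fun ε' hε' => ?_
    have hlt : limsup (fun Q => ∫⁻ x in S Q ∩ W, ENNReal.ofReal (f x) ∂μ) atTop <
        L + ENNReal.ofReal ε' := hB.trans_lt (ENNReal.lt_add_right hLne
          (ENNReal.ofReal_pos.2 hε').ne')
    refine limsup_le_of_le (isCoboundedUnder_le_of_le atTop
      fun Q => ENNReal.toReal_nonneg) ?_
    filter_upwards [eventually_lt_of_limsup_lt hlt] with Q hQ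
    have h1 : (∫⁻ x in S Q ∩ W, ENNReal.ofReal (f x) ∂μ).toReal ≤
        (L + ENNReal.ofReal ε').toReal :=
      ENNReal.toReal_mono (ENNReal.add_ne_top.2 ⟨hLne, ENNReal.ofReal_ne_top⟩) hQ.le
    rwa [ENNReal.toReal_add hLne ENNReal.ofReal_ne_top,
      ENNReal.toReal_ofReal hε'.le] at h1
  have hLt : L.toReal = ω * T.toReal := by
    rw [hL, ENNReal.toReal_mul, ENNReal.toReal_ofReal hω0.le]
  simp only [hint]
  rw [← hT, ← hLt]
  exact hgoal
end

section
/- Let U₀ be a ball in ℝ^m, p ∈ (0,1), and let g: Ṽ → ℝ be a C¹ function on an open set Ṽ ⊆ ℝ^{m−1} with |∇g(y)| ≤ p^{−1} for all y ∈ Ṽ (sup norm). Let R := {(g(y), y) : y ∈ V} for some V ⊆ Ṽ, and suppose η > 0 is such that the η-neighborhood (in ℝ^{m−1}) of V is contained in Ṽ. Then the η-neighborhood of R in ℝ^m (in the sup norm) is contained in {(λ + g(y), y) : |λ| ≤ η m p^{−1}, y ∈ Ṽ}, i.e. Δ(R, η) ⊆ Δ₁(Graph(g), η m p^{−1}). 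-/
/-- if `g` has all partial derivatives bounded by `p⁻¹` on `Vt`, `R` is the
graph of `g` over `V ⊆ Vt`, and the `η`-neighborhood of `V` lies in `Vt`, then the
`η`-neighborhood of `R` (sup norm on `ℝ × ℝ^{m-1}`) is contained in the
`η·m·p⁻¹`-thickening of the graph of `g` in the first coordinate direction. -/
theorem stmt11 (k : ℕ) (p : ℝ) (hp0 : 0 < p) (hp1 : p < 1)
    (Vt : Set (Fin k → ℝ)) (hVt : IsOpen Vt)
    (g : (Fin k → ℝ) → ℝ) (hg : ContDiffOn ℝ 1 g Vt)
    (hgrad : ∀ y ∈ Vt, DifferentiableAt ℝ g y ∧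
      ∀ i : Fin k, |fderiv ℝ g y (Pi.single i 1)| ≤ p⁻¹)
    (V : Set (Fin k → ℝ)) (hV : V ⊆ Vt)
    (η : ℝ) (hη : 0 < η)
    (hnbhd : ∀ z : Fin k → ℝ, (∃ y ∈ V, dist z y ≤ η) → z ∈ Vt)
    (R : Set (ℝ × (Fin k → ℝ))) (hR : R = {x | x.2 ∈ V ∧ x.1 = g x.2}) :
    {x : ℝ × (Fin k → ℝ) | ∃ r ∈ R, dist x r < η} ⊆
      {x : ℝ × (Fin k → ℝ) | ∃ y ∈ Vt, ∃ l : ℝ,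
        |l| ≤ η * (k + 1) * p⁻¹ ∧ x = (g y + l, y)} := by
  subst hR
  rintro ⟨x1, z⟩ ⟨⟨r1, r2⟩, ⟨hr2V, hr1⟩, hdist⟩
  have hd1 : dist x1 r1 < η := lt_of_le_of_lt (le_max_left _ _) hdist
  have hd2 : dist z r2 < η := lt_of_le_of_lt (le_max_right _ _) hdist
  have hzVt : z ∈ Vt := hnbhd z ⟨r2, hr2V, hd2.le⟩
  refine ⟨z, hzVt, x1 - g z, ?_, by simp⟩
  -- the segment lives in the closed ball around r2
  set s : Set (Fin k → ℝ) := Metric.closedBall r2 η with hs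
  have hsVt : s ⊆ Vt := fun y hy => hnbhd y ⟨r2, hr2V, Metric.mem_closedBall.mp hy⟩
  have hbound : ∀ y ∈ s, ‖fderiv ℝ g y‖ ≤ (k : ℝ) * p⁻¹ := by
    intro y hy
    obtain ⟨_, hcoord⟩ := hgrad y (hsVt hy)
    refine ContinuousLinearMap.opNorm_le_bound _ (by positivity) fun v => ?_
    have hv : v = ∑ i, v i • (Pi.single i 1 : Fin k → ℝ) := by
      funext j
      simp [Finset.sum_apply, Pi.single_apply]
    calc ‖fderiv ℝ g y v‖ = ‖∑ i, v i * fderiv ℝ g y (Pi.single i 1)‖ := by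
          conv_lhs => rw [hv]
          simp [map_sum, map_smul, smul_eq_mul]
      _ ≤ ∑ i, ‖v i * fderiv ℝ g y (Pi.single i 1)‖ := norm_sum_le _ _
      _ ≤ ∑ _i : Fin k, ‖v‖ * p⁻¹ := by
          refine Finset.sum_le_sum fun i _ => ?_
          rw [norm_mul]
          exact mul_le_mul (norm_le_pi_norm v i) (hcoord i) (abs_nonneg _)
            (norm_nonneg _)
      _ = (k : ℝ) * p⁻¹ * ‖v‖ := by
          simp [Finset.sum_const]; ring
  have hdiff : ∀ y ∈ s, DifferentiableAt ℝ g y := fun y hy => (hgrad y (hsVt hy)).1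
  have hzs : z ∈ s := Metric.mem_closedBall.mpr hd2.le
  have hr2s : r2 ∈ s := Metric.mem_closedBall_self hη.le
  have key : ‖g z - g r2‖ ≤ (k : ℝ) * p⁻¹ * ‖z - r2‖ :=
    (convex_closedBall r2 η).norm_image_sub_le_of_norm_fderiv_le hdiff hbound hr2s hzs
  have hzr : ‖z - r2‖ ≤ η := by
    rw [← dist_eq_norm]; exact hd2.le
  have hp1' : (1 : ℝ) ≤ p⁻¹ := by nlinarith [inv_pos.mpr hp0, mul_inv_cancel₀ hp0.ne']
  have h1 : |x1 - g z| ≤ |x1 - r1| + |g r2 - g z| := by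
    have hr1' : r1 = g r2 := hr1
    have : x1 - g z = (x1 - r1) + (g r2 - g z) := by rw [hr1']; ring
    rw [this]; exact abs_add_le _ _
  have h2 : |x1 - r1| ≤ η := by rw [← Real.dist_eq]; exact hd1.le
  have h3 : |g r2 - g z| ≤ (k : ℝ) * p⁻¹ * η := by
    rw [abs_sub_comm]
    calc |g z - g r2| ≤ (k : ℝ) * p⁻¹ * ‖z - r2‖ := key
      _ ≤ (k : ℝ) * p⁻¹ * η := by
          apply mul_le_mul_of_nonneg_left hzr; positivity
  calc |x1 - g z| ≤ η + (k : ℝ) * p⁻¹ * η := by linarith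
    _ ≤ η * p⁻¹ + (k : ℝ) * p⁻¹ * η := by nlinarith
    _ = η * (k + 1) * p⁻¹ := by ring
end
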